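/- Deterministic core of the RSD-S verification theorem: let 𝒦 and 𝒳 be finite nonempty sets; for each k ∈ 𝒦 let φ_k : 𝒳 → ℝ be injective and u_k ∈ ℝ, and set ψ_k := T(u_k, φ_k); assume the values ψ_k(x), for (k,x) ∈ 𝒦×𝒳, are pairwise distinct; fix 1 ≤ W ≤ |𝒦×𝒳| and let ((k_1,x_1),…,(k_W,x_W)) be the W pairs with the largest values of ψ_k(x), in strictly decreasing order. Then for every k ∈ 𝒦, writing m := |{i : 1 ≤ i ≤ W, k_i = k}|, the subsequence (x_i : k_i = k), taken in order, equals the list of the m elements of 𝒳 with the largest φ_k-values, in strictly decreasing order of φ_k. -/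
import Mathlib


open scoped BigOperators

/-- The Stochastic-Beam-Search transform
`T(u, φ)(x) := −log(exp(−u) − exp(−M) + exp(−φ(x)))`, where `M := max_{y} φ(y)`. -/
noncomputable def Tmap {X : Type*} [Fintype X] [Nonempty X] (u : ℝ) (φ : X → ℝ) (x : X) : ℝ :=
  -Real.log (Real.exp (-u) - Real.exp (-(Finset.univ.sup' Finset.univ_nonempty φ))
    + Real.exp (-(φ x)))

/-- `IsTopList f s l` says that `l` is the list of the `l.length` elements of `s` with the
largest `f`-values, arranged in strictly decreasing order of `f`. -/
def IsTopList {A : Type*} (f : A → ℝ) (s : Finset A) (l : List A) : Prop :=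
  l.Nodup ∧ (∀ a ∈ l, a ∈ s) ∧ l.Pairwise (fun a b => f b < f a) ∧
    ∀ a ∈ s, a ∉ l → ∀ b ∈ l, f a < f b

lemma Tmap_pos_arg {X : Type*} [Fintype X] [Nonempty X] (u : ℝ) (φ : X → ℝ) (x : X) :
    0 < Real.exp (-u) - Real.exp (-(Finset.univ.sup' Finset.univ_nonempty φ))
      + Real.exp (-(φ x)) := by
  have h : Real.exp (-(Finset.univ.sup' Finset.univ_nonempty φ)) ≤ Real.exp (-(φ x)) := by
    apply Real.exp_le_exp.mpr
    simp only [neg_le_neg_iff]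
    exact Finset.le_sup' φ (Finset.mem_univ x)
  have := Real.exp_pos (-u)
  linarith

lemma Tmap_lt_iff {X : Type*} [Fintype X] [Nonempty X] (u : ℝ) (φ : X → ℝ) (x y : X) :
    Tmap u φ x < Tmap u φ y ↔ φ x < φ y := by
  unfold Tmap
  rw [neg_lt_neg_iff, Real.log_lt_log_iff (Tmap_pos_arg u φ y) (Tmap_pos_arg u φ x),
    add_lt_add_iff_left, Real.exp_lt_exp, neg_lt_neg_iff]

theorem rsds_topW_restriction {K X : Type*} [Fintype K] [Nonempty K] [DecidableEq K]
    [Fintype X] [Nonempty X]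
    (φ : K → X → ℝ) (hφ : ∀ k, Function.Injective (φ k)) (u : K → ℝ)
    (hdistinct : Function.Injective fun kx : K × X => Tmap (u kx.1) (φ kx.1) kx.2)
    (W : ℕ) (hW1 : 1 ≤ W) (hW2 : W ≤ Fintype.card (K × X))
    (l : List (K × X))
    (hl : IsTopList (fun kx : K × X => Tmap (u kx.1) (φ kx.1) kx.2) Finset.univ l)
    (hlen : l.length = W)
    (k : K) :
    IsTopList (φ k) Finset.univ ((l.filter (fun kx => decide (kx.1 = k))).map Prod.snd) := by
  obtain ⟨hnd, -, hpw, htop⟩ := hl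
  set L := l.filter (fun kx => decide (kx.1 = k)) with hL
  have hfst : ∀ p ∈ L, p.1 = k := by
    intro p hp
    have := (List.mem_filter.mp hp).2
    simpa using this
  have hmemL : ∀ p ∈ L, p ∈ l := fun p hp => (List.mem_filter.mp hp).1
  have hmemF : ∀ a : X, a ∈ L.map Prod.snd ↔ (k, a) ∈ l := by
    intro a
    constructor
    · rintro ha
      obtain ⟨p, hp, rfl⟩ := List.mem_map.mp ha
      have h1 := hfst p hp
      have h2 := hmemL p hp
      rw [← h1]
      simpa using h2
    · intro h
      exact List.mem_map.mpr ⟨(k, a), List.mem_filter.mpr ⟨h, by simp⟩, rfl⟩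
  refine ⟨?_, fun a _ => Finset.mem_univ a, ?_, ?_⟩
  · apply List.Nodup.map_on _ (hnd.filter _)
    intro p hp q hq hpq
    exact Prod.ext ((hfst p hp).trans (hfst q hq).symm) hpq
  · rw [List.pairwise_map]
    have hpwL : L.Pairwise (fun p q : K × X =>
        Tmap (u q.1) (φ q.1) q.2 < Tmap (u p.1) (φ p.1) p.2) := hpw.filter _
    refine List.Pairwise.imp_of_mem ?_ hpwL
    intro p q hp hq h
    have h1 := hfst p hp
    have h2 := hfst q hq
    rw [h1, h2] at h
    exact (Tmap_lt_iff (u k) (φ k) q.2 p.2).mp h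
  · intro a _ ha b hb
    obtain ⟨q, hq, rfl⟩ := List.mem_map.mp hb
    have hqk := hfst q hq
    have hka : (k, a) ∉ l := fun h => ha ((hmemF a).mpr h)
    have h3 : Tmap (u k) (φ k) a < Tmap (u k) (φ k) q.2 := by
      simpa [hqk] using htop (k, a) (Finset.mem_univ _) hka q (hmemL q hq)
    exact (Tmap_lt_iff (u k) (φ k) a q.2).mp h3
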